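/- Let n ≥ 1 and let k_1,…,k_n be integers with k_i ≥ 2 for every i, and suppose at least one k_i ≥ 3. Let C = T(k_1,…,k_n) be the integer tridiagonal matrix with diagonal entries k_i and off-diagonal entries −1 on the sub- and super-diagonal. Then the cokernel ℤ^n / Cℤ^n is a finite cyclic group whose order equals Σ_{μ ∈ M(P_n)} (−1)^{|μ|} Π_{v ∉ V(μ)} k_v, the sum being over all matchings of the path graph P_n. (This is the sandpile group of the polygon chain PC_n whose stack of polygons have k_1,…,k_n sides, and the order is its number of spanning trees τ(PC_n).) -/

import Mathlib

/-- `tridiag x n` is the `n × n` tridiagonal matrix `T(x_1, …, x_n)` whose `(i,i)`-entry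
is `x (i+1)` (so the diagonal reads `x 1, …, x n`), whose `(i,j)`-entry is `-1` when
`|i - j| = 1`, and whose other entries are `0`; equivalently `diag(x) - A(P_n)` for the
path graph `P_n`. -/
def tridiag {R : Type*} [CommRing R] (x : ℕ → R) (n : ℕ) :
    Matrix (Fin n) (Fin n) R :=
  Matrix.of fun i j =>
    if (i : ℕ) = j then x ((i : ℕ) + 1)
    else if (i : ℕ) + 1 = j ∨ (j : ℕ) + 1 = i then -1 else 0

/-- The matchings of the path graph `P_n` on vertices `0, …, n-1`: a matching is
encoded by the set `μ` of indices `i < n - 1` of its edges `{i, i+1}`, no two of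
which may be consecutive. -/
def pathMatchings (n : ℕ) : Finset (Finset ℕ) :=
  (Finset.range (n - 1)).powerset.filter (fun μ => ∀ i ∈ μ, i + 1 ∉ μ)

/-- The set of vertices of `P_n` covered by a matching `μ` (the edge with index `i`
covers vertices `i` and `i + 1`). -/
def coveredVertices (μ : Finset ℕ) : Finset ℕ :=
  μ ∪ μ.image (· + 1)

/-! ### Auxiliary lemmas -/

section Aux

lemma tridiag_apply {R : Type*} [CommRing R] (x : ℕ → R) (n : ℕ) (i j : Fin n) :
    tridiag x n i j =
      if (i : ℕ) = j then x ((i : ℕ) + 1)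
      else if (i : ℕ) + 1 = j ∨ (j : ℕ) + 1 = i then -1 else 0 := rfl

lemma tridiag_eval {R : Type*} [CommRing R] (x : ℕ → R) (n : ℕ) (i j : Fin n)
    (vi vj : ℕ) (hi : (i : ℕ) = vi) (hj : (j : ℕ) = vj) :
    tridiag x n i j =
      if vi = vj then x (vi + 1)
      else if vi + 1 = vj ∨ vj + 1 = vi then -1 else 0 := by
  rw [tridiag_apply, hi, hj]

lemma succAbove_val {m : ℕ} (p : Fin (m+1)) (i : Fin m) :
    ((p.succAbove i : Fin (m+1)) : ℕ) = if (i : ℕ) < p then (i : ℕ) else (i : ℕ) + 1 := by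
  rcases Nat.lt_or_ge (i : ℕ) (p : ℕ) with h | h
  · rw [Fin.succAbove_of_castSucc_lt _ _ (by simpa [Fin.lt_def] using h)]
    simp [h]
  · rw [Fin.succAbove_of_le_castSucc _ _ (by simpa [Fin.le_def] using h)]
    simp [Nat.not_lt.mpr h]

lemma tridiag_det_zero {R : Type*} [CommRing R] (k : ℕ → R) : (tridiag k 0).det = 1 :=
  Matrix.det_fin_zero

lemma tridiag_det_one {R : Type*} [CommRing R] (k : ℕ → R) : (tridiag k 1).det = k 1 := by
  simp [Matrix.det_fin_one, tridiag]

lemma tridiag_submatrix {R : Type*} [CommRing R] (k : ℕ → R) (n : ℕ) :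
    (tridiag k (n+1)).submatrix Fin.castSucc Fin.castSucc = tridiag k n := by
  ext i j
  simp [tridiag]

lemma tridiag_det_rec {R : Type*} [CommRing R] (k : ℕ → R) (n : ℕ) :
    (tridiag k (n+2)).det = k (n+2) * (tridiag k (n+1)).det - (tridiag k n).det := by
  set A := tridiag k (n+2) with hA
  have hrow := Matrix.det_succ_row A (Fin.last (n+1))
  set a : Fin (n+2) := Fin.castSucc (Fin.last n) with ha
  set b : Fin (n+2) := Fin.last (n+1) with hb
  have hav : (a : ℕ) = n := by simp [ha]
  have hbv : (b : ℕ) = n + 1 := by simp [hb]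
  have hab : a ≠ b := by simp [ha, hb, Fin.ext_iff]
  have hzero : ∀ j ∈ Finset.univ, j ∉ ({a, b} : Finset (Fin (n+2))) →
      (-1 : R) ^ ((b : ℕ) + (j : ℕ)) * A b j *
        (A.submatrix b.succAbove j.succAbove).det = 0 := by
    intro j _ hj
    simp only [Finset.mem_insert, Finset.mem_singleton, not_or] at hj
    have h1 : (j : ℕ) ≠ n := fun h => hj.1 (by rw [Fin.ext_iff, hav, h])
    have h2 : (j : ℕ) ≠ n + 1 := fun h => hj.2 (by rw [Fin.ext_iff, hbv, h])
    have hlt : (j : ℕ) < n + 2 := j.isLt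
    have hz : A b j = 0 := by
      rw [hA, tridiag_eval k (n+2) b j (n+1) (j : ℕ) hbv rfl,
        if_neg (by omega), if_neg (by omega)]
    rw [hz]; ring
  rw [hrow, ← Finset.sum_subset (Finset.subset_univ ({a, b} : Finset (Fin (n+2)))) hzero,
    Finset.sum_pair hab]
  have hAlb : A b b = k (n + 2) := by
    rw [hA, tridiag_eval k (n+2) b b (n+1) (n+1) hbv hbv, if_pos rfl]
  have hAla : A b a = -1 := by
    rw [hA, tridiag_eval k (n+2) b a (n+1) n hbv hav, if_neg (by omega),
      if_pos (by omega)]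
  have hbterm : (-1 : R) ^ ((b : ℕ) + (b : ℕ)) * A b b *
      (A.submatrix b.succAbove b.succAbove).det
      = k (n+2) * (tridiag k (n+1)).det := by
    rw [hAlb]
    have hsub : (A.submatrix b.succAbove b.succAbove) = tridiag k (n+1) := by
      rw [hb, Fin.succAbove_last]
      exact tridiag_submatrix k (n+1)
    rw [hsub, hbv]
    have hs : (-1 : R) ^ (n + 1 + (n + 1)) = 1 := Even.neg_one_pow ⟨n + 1, rfl⟩
    rw [hs]; ring
  have haterm : (-1 : R) ^ ((b : ℕ) + (a : ℕ)) * A b a *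
      (A.submatrix b.succAbove a.succAbove).det
      = - (tridiag k n).det := by
    rw [hAla, hbv, hav]
    have hsign : (-1 : R) ^ (n + 1 + n) = -1 := Odd.neg_one_pow ⟨n, by ring⟩
    rw [hsign]
    set M' := A.submatrix b.succAbove a.succAbove with hM'
    have hMe : ∀ (i j : Fin (n+1)) (vj : ℕ),
        ((a.succAbove j : Fin (n+2)) : ℕ) = vj →
        M' i j = if (i : ℕ) = vj then k ((i : ℕ) + 1)
          else if (i : ℕ) + 1 = vj ∨ vj + 1 = (i : ℕ) then -1 else 0 := by
      intro i j vj hvj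
      rw [hM', Matrix.submatrix_apply, hb, Fin.succAbove_last, hA,
        tridiag_eval k (n+2) _ _ (i : ℕ) vj (by simp) hvj]
    have hvlast : ((a.succAbove (Fin.last n) : Fin (n+2)) : ℕ) = n + 1 := by
      rw [succAbove_val, hav]; simp
    have hdetM' : M'.det = - (tridiag k n).det := by
      rw [Matrix.det_succ_column M' (Fin.last n), Finset.sum_eq_single (Fin.last n)]
      · have hcol : M' (Fin.last n) (Fin.last n) = -1 := by
          rw [hMe _ _ (n+1) hvlast, Fin.val_last, if_neg (by omega), if_pos (by omega)]
        have hsub : M'.submatrix (Fin.last n).succAbove (Fin.last n).succAbove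
            = tridiag k n := by
          ext i j
          rw [Matrix.submatrix_apply, Fin.succAbove_last, hMe _ _ (j : ℕ)
            (by rw [succAbove_val, hav]; simp [j.isLt])]
          rw [tridiag_apply]
          simp
        rw [hcol, hsub, Fin.val_last]
        have hs2 : (-1 : R) ^ (n + n) = 1 := Even.neg_one_pow ⟨n, rfl⟩
        rw [hs2]; ring
      · intro i _ hi
        have hiv : (i : ℕ) ≠ n := fun h => hi (by rw [Fin.ext_iff, Fin.val_last, h])
        have hilt : (i : ℕ) < n + 1 := i.isLt
        have hz : M' i (Fin.last n) = 0 := by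
          rw [hMe _ _ (n+1) hvlast, if_neg (by omega), if_neg (by omega)]
        rw [hz]; ring
      · intro h; exact absurd (Finset.mem_univ _) h
    rw [hdetM']; ring
  rw [haterm, hbterm]; ring

lemma mem_pathMatchings {n : ℕ} {μ : Finset ℕ} :
    μ ∈ pathMatchings n ↔ (∀ x ∈ μ, x < n - 1) ∧ ∀ i ∈ μ, i + 1 ∉ μ := by
  simp [pathMatchings, Finset.subset_iff]

lemma mem_cov {μ : Finset ℕ} {x : ℕ} :
    x ∈ coveredVertices μ ↔ x ∈ μ ∨ ∃ y ∈ μ, y + 1 = x := by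
  simp [coveredVertices]

/-- The matching-sum `Σ_{μ ∈ M(P_n)} (-1)^{|μ|} Π_{v ∉ V(μ)} k_v`. -/
def msum (k : ℕ → ℤ) (n : ℕ) : ℤ :=
  ∑ μ ∈ pathMatchings n, (-1 : ℤ) ^ μ.card *
    ∏ v ∈ Finset.range n \ coveredVertices μ, k (v + 1)

lemma pathMatchings_zero : pathMatchings 0 = {∅} := by decide

lemma pathMatchings_one : pathMatchings 1 = {∅} := by decide

lemma msum_zero (k : ℕ → ℤ) : msum k 0 = 1 := by
  simp [msum, pathMatchings_zero, coveredVertices]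

lemma msum_one (k : ℕ → ℤ) : msum k 1 = k 1 := by
  simp [msum, pathMatchings_one, coveredVertices]

lemma msum_rec (k : ℕ → ℤ) (n : ℕ) :
    msum k (n + 2) = k (n + 2) * msum k (n + 1) - msum k n := by
  classical
  rw [msum, ← Finset.sum_filter_add_sum_filter_not (pathMatchings (n+2)) (fun μ => n ∈ μ)]
  have hpart1 : (pathMatchings (n+2)).filter (fun μ => ¬ n ∈ μ) = pathMatchings (n+1) := by
    ext μ
    simp only [Finset.mem_filter, mem_pathMatchings]
    constructor
    · rintro ⟨⟨h1, h2⟩, h3⟩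
      exact ⟨fun x hx => by have := h1 x hx; have : x ≠ n := fun he => h3 (he ▸ hx); omega, h2⟩
    · rintro ⟨h1, h2⟩
      refine ⟨⟨fun x hx => by have := h1 x hx; omega, h2⟩, fun hc => by have := h1 n hc; omega⟩
  have hterm1 : ∀ μ ∈ pathMatchings (n+1),
      (-1 : ℤ) ^ μ.card * ∏ v ∈ Finset.range (n+2) \ coveredVertices μ, k (v + 1)
      = k (n+2) * ((-1 : ℤ) ^ μ.card * ∏ v ∈ Finset.range (n+1) \ coveredVertices μ, k (v + 1)) := by
    intro μ hμ
    rw [mem_pathMatchings] at hμ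
    have hset : Finset.range (n+2) \ coveredVertices μ
        = insert (n+1) (Finset.range (n+1) \ coveredVertices μ) := by
      ext x
      simp only [Finset.mem_sdiff, Finset.mem_range, Finset.mem_insert, mem_cov]
      constructor
      · rintro ⟨hlt, hnc⟩
        by_cases hx : x = n + 1
        · exact Or.inl hx
        · exact Or.inr ⟨by omega, hnc⟩
      · rintro (rfl | ⟨hlt, hnc⟩)
        · refine ⟨by omega, ?_⟩
          rintro (h | ⟨y, hy, hy2⟩)
          · have := hμ.1 _ h; omega
          · have := hμ.1 _ hy; omega
        · exact ⟨by omega, hnc⟩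
    rw [hset, Finset.prod_insert (by simp)]
    ring
  have hsum1 : ∑ μ ∈ (pathMatchings (n+2)).filter (fun μ => ¬ n ∈ μ),
      (-1 : ℤ) ^ μ.card * ∏ v ∈ Finset.range (n+2) \ coveredVertices μ, k (v + 1)
      = k (n+2) * msum k (n+1) := by
    rw [hpart1, Finset.sum_congr rfl hterm1, ← Finset.mul_sum, msum]
  have hsum2 : ∑ μ ∈ (pathMatchings (n+2)).filter (fun μ => n ∈ μ),
      (-1 : ℤ) ^ μ.card * ∏ v ∈ Finset.range (n+2) \ coveredVertices μ, k (v + 1)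
      = - msum k n := by
    rw [msum, ← Finset.sum_neg_distrib]
    refine Finset.sum_nbij' (fun μ => μ.erase n) (fun μ => insert n μ) ?_ ?_ ?_ ?_ ?_
    · intro μ hμ
      simp only [Finset.mem_filter, mem_pathMatchings] at hμ
      obtain ⟨⟨h1, h2⟩, h3⟩ := hμ
      rw [mem_pathMatchings]
      constructor
      · intro x hx
        rw [Finset.mem_erase] at hx
        have hlt := h1 x hx.2
        have hne := hx.1
        have : x ≠ n - 1 := by
          intro he
          rcases Nat.eq_zero_or_pos n with h0 | h0
          · omega
          · have : x + 1 = n := by omega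
            exact h2 x hx.2 (this ▸ h3)
        omega
      · intro i hi
        rw [Finset.mem_erase] at hi
        intro hc
        exact h2 i hi.2 (Finset.mem_of_mem_erase hc)
    · intro μ hμ
      rw [mem_pathMatchings] at hμ
      simp only [Finset.mem_filter, mem_pathMatchings]
      refine ⟨⟨?_, ?_⟩, by simp⟩
      · intro x hx
        rcases Finset.mem_insert.mp hx with rfl | hx
        · omega
        · have := hμ.1 x hx; omega
      · intro i hi
        rcases Finset.mem_insert.mp hi with rfl | hi
        · intro hc
          rcases Finset.mem_insert.mp hc with h | h
          · omega
          · have := hμ.1 _ h; omega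
        · intro hc
          rcases Finset.mem_insert.mp hc with h | h
          · have := hμ.1 _ hi; omega
          · exact hμ.2 i hi h
    · intro μ hμ
      simp only [Finset.mem_filter] at hμ
      exact Finset.insert_erase hμ.2
    · intro μ hμ
      rw [mem_pathMatchings] at hμ
      refine Finset.erase_insert ?_
      intro hc
      have := hμ.1 n hc; omega
    · intro μ hμ
      simp only [Finset.mem_filter, mem_pathMatchings] at hμ
      obtain ⟨⟨h1, h2⟩, h3⟩ := hμ
      have hcard : μ.card = (μ.erase n).card + 1 := by
        rw [Finset.card_erase_of_mem h3]
        have : 0 < μ.card := Finset.card_pos.mpr ⟨n, h3⟩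
        omega
      have hset : Finset.range (n+2) \ coveredVertices μ
          = Finset.range n \ coveredVertices (μ.erase n) := by
        ext x
        simp only [Finset.mem_sdiff, Finset.mem_range, mem_cov, Finset.mem_erase]
        constructor
        · rintro ⟨hlt, hnc⟩
          have hx1 : x ≠ n := fun he => hnc (Or.inl (he ▸ h3))
          have hx2 : x ≠ n + 1 := fun he => hnc (Or.inr ⟨n, h3, he.symm⟩)
          refine ⟨by omega, ?_⟩
          rintro (⟨-, h⟩ | ⟨y, ⟨-, hy⟩, hy2⟩)
          · exact hnc (Or.inl h)
          · exact hnc (Or.inr ⟨y, hy, hy2⟩)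
        · rintro ⟨hlt, hnc⟩
          refine ⟨by omega, ?_⟩
          rintro (h | ⟨y, hy, hy2⟩)
          · exact hnc (Or.inl ⟨by omega, h⟩)
          · refine hnc (Or.inr ⟨y, ⟨by omega, hy⟩, hy2⟩)
      rw [hcard, hset, pow_succ]
      ring
  rw [hsum2, hsum1]
  ring

lemma tridiag_det_eq_msum (k : ℕ → ℤ) : ∀ n : ℕ, (tridiag k n).det = msum k n := by
  intro n
  induction n using Nat.strong_induction_on with
  | _ n ih =>
    match n with
    | 0 => rw [tridiag_det_zero, msum_zero]
    | 1 => rw [tridiag_det_one, msum_one]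
    | (m + 2) =>
      rw [tridiag_det_rec, msum_rec, ih (m+1) (by omega), ih m (by omega)]

lemma tridiag_det_ge_one (k : ℕ → ℤ) (n : ℕ) (hn : 1 ≤ n)
    (h2 : ∀ i, 1 ≤ i → i ≤ n → 2 ≤ k i) : 1 ≤ (tridiag k n).det := by
  have aux : ∀ m : ℕ, m + 1 ≤ n →
      1 ≤ (tridiag k m).det ∧ (tridiag k m).det ≤ (tridiag k (m+1)).det := by
    intro m
    induction m with
    | zero =>
      intro h
      rw [tridiag_det_zero, tridiag_det_one]
      have := h2 1 (by omega) (by omega)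
      exact ⟨le_refl _, by linarith⟩
    | succ p ih =>
      intro h
      obtain ⟨h1, h2'⟩ := ih (by omega)
      have hk : 2 ≤ k (p + 2) := h2 (p+2) (by omega) (by omega)
      rw [tridiag_det_rec]
      constructor
      · nlinarith
      · nlinarith
  obtain ⟨h1, h2'⟩ := aux (n - 1) (by omega)
  rw [Nat.sub_add_cancel hn] at h2'
  linarith

lemma mulVecLin_injective {n : ℕ} (M : Matrix (Fin n) (Fin n) ℤ) (hd : M.det ≠ 0) :
    Function.Injective M.mulVecLin := by
  intro v w h
  simp only [Matrix.mulVecLin_apply] at h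
  have h2 : M.adjugate.mulVec (M.mulVec v) = M.adjugate.mulVec (M.mulVec w) := by rw [h]
  rw [Matrix.mulVec_mulVec, Matrix.mulVec_mulVec, Matrix.adjugate_mul,
    Matrix.smul_mulVec, Matrix.smul_mulVec, Matrix.one_mulVec,
    Matrix.one_mulVec] at h2
  exact smul_right_injective _ hd h2

lemma card_coker {n : ℕ} (M : Matrix (Fin n) (Fin n) ℤ) (hd : M.det ≠ 0) :
    Finite ((Fin n → ℤ) ⧸ LinearMap.range M.mulVecLin) ∧
    Nat.card ((Fin n → ℤ) ⧸ LinearMap.range M.mulVecLin) = M.det.natAbs := by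
  classical
  set N : Submodule ℤ (Fin n → ℤ) := LinearMap.range M.mulVecLin with hN
  have hinj := mulVecLin_injective M hd
  have hcardeq : Nat.card ((Fin n → ℤ) ⧸ N) = N.toAddSubgroup.index := rfl
  have hne : N.toAddSubgroup.index ≠ 0 := by
    rw [Int.submodule_toAddSubgroup_index_ne_zero_iff]
    exact ⟨(LinearEquiv.ofInjective M.mulVecLin hinj).symm⟩
  obtain ⟨m, snf⟩ := N.smithNormalForm (Pi.basisFun ℤ (Fin n))
  have hm : m = n := by
    have := snf.toAddSubgroup_index_ne_zero_iff.mp hne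
    simpa using this
  obtain rfl := hm.symm
  have hfin : Finite ((Fin n → ℤ) ⧸ N) := by
    have := Nat.card_ne_zero.mp (hcardeq ▸ hne)
    exact this.2
  refine ⟨hfin, ?_⟩
  rw [hcardeq, snf.toAddSubgroup_index_eq_pow_mul_prod]
  simp only [Fintype.card_fin, Nat.sub_self, pow_zero, one_mul]
  have hprod : ∏ i : Fin n, (Ideal.span {snf.a i}).toAddSubgroup.index
      = (∏ i : Fin n, snf.a i).natAbs := by
    rw [show (∏ i : Fin n, snf.a i).natAbs = ∏ i : Fin n, (snf.a i).natAbs from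
      (map_prod Int.natAbsHom _ _)]
    exact Finset.prod_congr rfl fun i _ => by
      rw [Ideal.span_singleton_toAddSubgroup_eq_zmultiples, Int.index_zmultiples]
  rw [hprod]
  obtain ⟨bM, bN, f, a, hsnf⟩ := snf
  simp only
  have hfbij : Function.Bijective f := Finite.injective_iff_bijective.mp f.injective
  set σ : Fin n ≃ Fin n := Equiv.ofBijective f hfbij with hσ
  set e1 : (Fin n → ℤ) ≃ₗ[ℤ] N := bM.equiv bN (Equiv.refl _) with he1
  set F : (Fin n → ℤ) →ₗ[ℤ] (Fin n → ℤ) := N.subtype ∘ₗ (e1 : (Fin n → ℤ) →ₗ[ℤ] N) with hF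
  have hFb : ∀ i, F (bM i) = a i • bM (f i) := by
    intro i
    rw [hF, LinearMap.comp_apply, LinearEquiv.coe_coe, he1, Module.Basis.equiv_apply,
      Equiv.refl_apply]
    exact hsnf i
  have hmat : LinearMap.toMatrix bM bM F = (Matrix.diagonal a).submatrix σ.symm id := by
    ext i j
    rw [LinearMap.toMatrix_apply, hFb, map_smul]
    simp only [Module.Basis.repr_self, Finsupp.smul_single, smul_eq_mul, mul_one,
      Matrix.submatrix_apply, id_eq]
    by_cases h : i = f j
    · subst h
      rw [Finsupp.single_eq_same]
      have : σ.symm (f j) = j := σ.symm_apply_apply j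
      rw [this, Matrix.diagonal_apply_eq]
    · rw [Finsupp.single_eq_of_ne' (Ne.symm h), Matrix.diagonal_apply_ne']
      intro hc
      apply h
      have hs : σ j = f j := rfl
      rw [← hs, hc, σ.apply_symm_apply]
  have hdetF : (LinearMap.det F).natAbs = (∏ i : Fin n, a i).natAbs := by
    rw [← LinearMap.det_toMatrix bM, hmat, Matrix.det_permute, Matrix.det_diagonal,
      Int.natAbs_mul]
    simp [Int.units_natAbs]
  rw [← hdetF]
  set g : (Fin n → ℤ) ≃ₗ[ℤ] N := LinearEquiv.ofInjective M.mulVecLin hinj with hg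
  have hFeq : F = M.mulVecLin ∘ₗ ((e1.trans g.symm : (Fin n → ℤ) ≃ₗ[ℤ] (Fin n → ℤ)) :
      (Fin n → ℤ) →ₗ[ℤ] (Fin n → ℤ)) := by
    refine LinearMap.ext fun v => ?_
    simp only [hF, LinearMap.comp_apply, LinearEquiv.coe_coe, LinearEquiv.trans_apply,
      Submodule.coe_subtype]
    have : M.mulVecLin (g.symm (e1 v)) = ((g (g.symm (e1 v)) : N) : Fin n → ℤ) := by
      rw [hg]
      rfl
    rw [this, g.apply_symm_apply]
  have hassoc : Associated (LinearMap.det F) (LinearMap.det M.mulVecLin) := by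
    rw [hFeq]
    have := LinearMap.associated_det_comp_equiv M.mulVecLin (e1.trans g.symm)
      (LinearEquiv.refl ℤ (Fin n → ℤ))
    simpa using this
  have hdet : LinearMap.det M.mulVecLin = M.det := by
    rw [← Matrix.toLin'_apply', LinearMap.det_toLin']
  rw [Int.natAbs_eq_iff_associated.mpr hassoc, hdet]

lemma tridiag_span_top (k : ℕ → ℤ) (n : ℕ) (hn : 0 < n) :
    Submodule.span ℤ {(Pi.single (⟨0, hn⟩ : Fin n) 1 : Fin n → ℤ)}
      ⊔ LinearMap.range (tridiag k n).mulVecLin = ⊤ := by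
  classical
  set S := Submodule.span ℤ {(Pi.single (⟨0, hn⟩ : Fin n) 1 : Fin n → ℤ)}
      ⊔ LinearMap.range (tridiag k n).mulVecLin with hS
  have key : ∀ m : ℕ, ∀ hm : m < n, (Pi.single (⟨m, hm⟩ : Fin n) 1 : Fin n → ℤ) ∈ S := by
    intro m
    induction m using Nat.strong_induction_on with
    | _ m ih =>
      intro hm
      match m with
      | 0 =>
        exact le_sup_left (α := Submodule ℤ (Fin n → ℤ))
          (Submodule.subset_span (Set.mem_singleton _))
      | 1 =>
        have h0 : (0 : ℕ) < n := by omega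
        have hcol : (tridiag k n).mulVecLin (Pi.single (⟨0, h0⟩ : Fin n) 1) ∈ S := by
          exact le_sup_right (α := Submodule ℤ (Fin n → ℤ)) (LinearMap.mem_range_self _ _)
        have hid : (Pi.single (⟨1, hm⟩ : Fin n) 1 : Fin n → ℤ)
            = k 1 • Pi.single (⟨0, h0⟩ : Fin n) 1
              - (tridiag k n).mulVecLin (Pi.single (⟨0, h0⟩ : Fin n) 1) := by
          funext i
          simp only [Matrix.mulVecLin_apply, Matrix.mulVec_single, tridiag, Matrix.of_apply,
            Pi.sub_apply, Pi.smul_apply, Pi.single_apply, smul_eq_mul, mul_one, Fin.ext_iff]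
          split_ifs <;> first | ring1 | (exfalso; omega) |
            (exfalso; simp_all only [false_or, or_false, not_or, Nat.succ_ne_zero]; omega) |
            (simp_all; try ring1; done) | (simp_all; omega)
          all_goals omega
        rw [hid]
        exact Submodule.sub_mem _ (Submodule.smul_mem _ _ (ih 0 (by omega) h0)) hcol
      | (p + 2) =>
        have hp1 : p + 1 < n := by omega
        have hp : p < n := by omega
        have hcol : (tridiag k n).mulVecLin (Pi.single (⟨p + 1, hp1⟩ : Fin n) 1) ∈ S :=
          le_sup_right (α := Submodule ℤ (Fin n → ℤ)) (LinearMap.mem_range_self _ _)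
        have hid : (Pi.single (⟨p + 2, hm⟩ : Fin n) 1 : Fin n → ℤ)
            = k (p + 2) • Pi.single (⟨p + 1, hp1⟩ : Fin n) 1
              - Pi.single (⟨p, hp⟩ : Fin n) 1
              - (tridiag k n).mulVecLin (Pi.single (⟨p + 1, hp1⟩ : Fin n) 1) := by
          funext i
          simp only [Matrix.mulVecLin_apply, Matrix.mulVec_single, tridiag, Matrix.of_apply,
            Pi.sub_apply, Pi.smul_apply, Pi.single_apply, smul_eq_mul, mul_one, Fin.ext_iff]
          split_ifs <;> first | ring1 | (exfalso; omega) |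
            (exfalso; simp_all only [false_or, or_false, not_or, Nat.succ_ne_zero]; omega) |
            (simp_all; try ring1; done) | (simp_all; omega)
          all_goals omega
        rw [hid]
        exact Submodule.sub_mem _ (Submodule.sub_mem _
          (Submodule.smul_mem _ _ (ih (p+1) (by omega) hp1))
          (ih p (by omega) hp)) hcol
  rw [eq_top_iff]
  rw [← (Pi.basisFun ℤ (Fin n)).span_eq]
  rw [Submodule.span_le]
  rintro x ⟨i, rfl⟩
  have h1 : (Pi.basisFun ℤ (Fin n)) i = Pi.single i 1 := by
    simp [Pi.basisFun_apply]
  rw [h1]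
  have h2 : i = (⟨(i : ℕ), i.isLt⟩ : Fin n) := by simp [Fin.ext_iff]
  rw [h2]
  exact key (i : ℕ) i.isLt

lemma coker_addCyclic (k : ℕ → ℤ) (n : ℕ) (hn : 0 < n) :
    IsAddCyclic ((Fin n → ℤ) ⧸ LinearMap.range (tridiag k n).mulVecLin) := by
  classical
  set N := LinearMap.range (tridiag k n).mulVecLin with hN
  refine ⟨Submodule.Quotient.mk (Pi.single (⟨0, hn⟩ : Fin n) 1), fun x => ?_⟩
  obtain ⟨v, rfl⟩ := Submodule.Quotient.mk_surjective N x
  have hv : v ∈ Submodule.span ℤ {(Pi.single (⟨0, hn⟩ : Fin n) 1 : Fin n → ℤ)} ⊔ N := by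
    rw [tridiag_span_top k n hn]; trivial
  obtain ⟨y, hy, z, hz, rfl⟩ := Submodule.mem_sup.mp hv
  obtain ⟨c, rfl⟩ := Submodule.mem_span_singleton.mp hy
  refine ⟨c, ?_⟩
  show c • (Submodule.Quotient.mk (Pi.single ⟨0, hn⟩ 1) : (Fin n → ℤ) ⧸ N) = _
  rw [← Submodule.Quotient.mk_smul, Submodule.Quotient.mk_add,
    (Submodule.Quotient.mk_eq_zero N).mpr hz, add_zero]

end Aux

/-- If `k_1, …, k_n` are integers with every `k_i ≥ 2` and some `k_i ≥ 3`, then the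
cokernel `ℤⁿ / T(k_1, …, k_n) ℤⁿ` of the tridiagonal matrix `C = T(k_1, …, k_n)` is a
finite cyclic group whose order equals
`Σ_{μ ∈ M(P_n)} (-1)^{|μ|} Π_{v ∉ V(μ)} k_v`, the sum being over all matchings of the
path graph `P_n`. (This is the sandpile group of the polygon chain `PC_n` whose stack
of polygons have `k_1, …, k_n` sides, and the order is `τ(PC_n)`.) -/
theorem polygonChain_sandpile_cyclic (n : ℕ) (hn : 1 ≤ n) (k : ℕ → ℤ)
    (h2 : ∀ i, 1 ≤ i → i ≤ n → 2 ≤ k i)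
    (h3 : ∃ i, 1 ≤ i ∧ i ≤ n ∧ 3 ≤ k i) :
    Finite ((Fin n → ℤ) ⧸ LinearMap.range (tridiag k n).mulVecLin) ∧
    IsAddCyclic ((Fin n → ℤ) ⧸ LinearMap.range (tridiag k n).mulVecLin) ∧
    (Nat.card ((Fin n → ℤ) ⧸ LinearMap.range (tridiag k n).mulVecLin) : ℤ) =
      ∑ μ ∈ pathMatchings n, (-1 : ℤ) ^ μ.card *
        ∏ v ∈ Finset.range n \ coveredVertices μ, k (v + 1) := by
  have hpos : 1 ≤ (tridiag k n).det := tridiag_det_ge_one k n hn h2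
  have hd : (tridiag k n).det ≠ 0 := by omega
  obtain ⟨hfin, hcard⟩ := card_coker (tridiag k n) hd
  refine ⟨hfin, coker_addCyclic k n hn, ?_⟩
  rw [hcard]
  rw [Int.natAbs_of_nonneg (by omega)]
  exact tridiag_det_eq_msum k n
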